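/- arXiv:math/0701124 — 2 statements merged into one kernel-verified Lean document; each statement's English description precedes it below -/
import Mathlib

section
/- Let Σ₀ be a p×p symmetric positive definite matrix, F a K×K symmetric positive definite matrix, B a p×K real matrix, and Σ = Σ₀ + B F B'. Then F⁻¹ (F⁻¹ + B'Σ₀⁻¹B)⁻¹ F⁻¹ ≼ F⁻¹ in the Loewner order (i.e. F⁻¹ − F⁻¹(F⁻¹ + B'Σ₀⁻¹B)⁻¹F⁻¹ is positive semidefinite), and consequently ‖B'Σ⁻¹B‖ ≤ 2‖F⁻¹‖, where ‖·‖ is the Frobenius norm. -/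
open Matrix

noncomputable section

/-- Frobenius norm `(tr (A Aᵀ))^{1/2}`. -/
def frob {m k : ℕ} (A : Matrix (Fin m) (Fin k) ℝ) : ℝ :=
  Real.sqrt ((A * Aᵀ).trace)

lemma psd_trace_nonneg {n : Type*} [Fintype n] [DecidableEq n] {M : Matrix n n ℝ}
    (hM : M.PosSemidef) : 0 ≤ M.trace := by
  exact hM.trace_nonneg

open scoped MatrixOrder in
lemma psd_trace_mul_nonneg {n : Type*} [Fintype n] [DecidableEq n] {X D : Matrix n n ℝ}
    (hX : X.PosSemidef) (hD : D.PosSemidef) : 0 ≤ (X * D).trace := by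
  have h2 : (CFC.sqrt X * D * CFC.sqrt X).PosSemidef := by
    have := hD.conjTranspose_mul_mul_same (CFC.sqrt X)
    rwa [(CFC.sqrt_nonneg X).posSemidef.1] at this
  have h3 : (X * D).trace = (CFC.sqrt X * D * CFC.sqrt X).trace := by
    conv_lhs => rw [← CFC.sqrt_mul_sqrt_self X hX.nonneg]
    rw [Matrix.mul_assoc, Matrix.trace_mul_comm, Matrix.mul_assoc]
  rw [h3]
  exact psd_trace_nonneg h2

/-- **Bound (2.12) in Fan–Fan–Lv.** If `Σ₀` and `F` are symmetric positive definite
and `Σ = Σ₀ + B F Bᵀ`, then `F⁻¹(F⁻¹ + BᵀΣ₀⁻¹B)⁻¹F⁻¹ ≼ F⁻¹` in the Loewner order,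
and consequently `‖BᵀΣ⁻¹B‖ ≤ 2‖F⁻¹‖`. -/
theorem BSigmaInvB_frob_bound (p K : ℕ)
    (S0 : Matrix (Fin p) (Fin p) ℝ) (hS0 : S0.PosDef)
    (F : Matrix (Fin K) (Fin K) ℝ) (hF : F.PosDef)
    (B : Matrix (Fin p) (Fin K) ℝ) :
    (F⁻¹ - F⁻¹ * (F⁻¹ + Bᵀ * S0⁻¹ * B)⁻¹ * F⁻¹).PosSemidef ∧
    frob (Bᵀ * (S0 + B * F * Bᵀ)⁻¹ * B) ≤ 2 * frob F⁻¹ := by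
  set A := F⁻¹ with hAdef
  set M := Bᵀ * S0⁻¹ * B with hMdef
  set N := A + M with hNdef
  have hA : A.PosDef := hF.inv
  have hMpsd : M.PosSemidef := by
    have := hS0.inv.posSemidef.conjTranspose_mul_mul_same B
    rwa [conjTranspose_eq_transpose_of_trivial] at this
  have hN : N.PosDef := hA.add_posSemidef hMpsd
  have hSig : (S0 + B * F * Bᵀ).PosDef := by
    refine hS0.add_posSemidef ?_
    have := hF.posSemidef.mul_mul_conjTranspose_same B
    rwa [conjTranspose_eq_transpose_of_trivial] at this
  -- Woodbury
  have hW : (S0 + B * F * Bᵀ)⁻¹ = S0⁻¹ - S0⁻¹ * B * N⁻¹ * Bᵀ * S0⁻¹ :=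
    Matrix.add_mul_mul_inv_eq_sub S0 B F Bᵀ hS0.isUnit hF.isUnit hN.isUnit
  have hNN : N * N⁻¹ = 1 := Matrix.mul_nonsing_inv N ((Matrix.isUnit_iff_isUnit_det N).1 hN.isUnit)
  have hN'N : N⁻¹ * N = 1 := Matrix.nonsing_inv_mul N ((Matrix.isUnit_iff_isUnit_det N).1 hN.isUnit)
  have h1 : M * N⁻¹ * A = A - A * N⁻¹ * A := by
    have e1 : M = N - A := by rw [hNdef]; abel
    rw [e1, Matrix.sub_mul, Matrix.sub_mul, hNN, Matrix.one_mul]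
  have h2 : M * N⁻¹ * A = M - M * N⁻¹ * M := by
    have e2 : A = N - M := by rw [hNdef]; abel
    rw [e2, Matrix.mul_sub, Matrix.mul_assoc M N⁻¹ N, hN'N, Matrix.mul_one,
      ← Matrix.mul_assoc]
  have key : Bᵀ * (S0 + B * F * Bᵀ)⁻¹ * B = A - A * N⁻¹ * A := by
    rw [hW, ← h1, h2, hMdef]
    simp only [Matrix.mul_sub, Matrix.sub_mul, Matrix.mul_assoc]
  have hXpsd : (Bᵀ * (S0 + B * F * Bᵀ)⁻¹ * B).PosSemidef := by
    have := hSig.inv.posSemidef.conjTranspose_mul_mul_same B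
    rwa [conjTranspose_eq_transpose_of_trivial] at this
  have part1 : (A - A * N⁻¹ * A).PosSemidef := key ▸ hXpsd
  refine ⟨part1, ?_⟩
  -- part 2
  set X := Bᵀ * (S0 + B * F * Bᵀ)⁻¹ * B with hXdef
  have hDpsd : (A * N⁻¹ * A).PosSemidef := by
    have := hN.inv.posSemidef.conjTranspose_mul_mul_same A
    rwa [hA.isHermitian.eq] at this
  have hXsymm : Xᵀ = X := by
    rw [← conjTranspose_eq_transpose_of_trivial, hXpsd.1]
  have hAsymm : Aᵀ = A := by
    rw [← conjTranspose_eq_transpose_of_trivial, hA.isHermitian.eq]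
  have hXA : X = A - A * N⁻¹ * A := key
  have t1 : 0 ≤ (X * (A * N⁻¹ * A)).trace := psd_trace_mul_nonneg hXpsd hDpsd
  have t2 : 0 ≤ ((A * N⁻¹ * A) * A).trace := psd_trace_mul_nonneg hDpsd hA.posSemidef
  have htr : (X * X).trace ≤ (A * A).trace := by
    have e3 : (X * X).trace = (X * A).trace - (X * (A * N⁻¹ * A)).trace := by
      rw [show X * X = X * A - X * (A * N⁻¹ * A) by rw [hXA]; rw [Matrix.mul_sub],
        Matrix.trace_sub]
    have e4 : (X * A).trace = (A * A).trace - ((A * N⁻¹ * A) * A).trace := by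
      rw [show X * A = A * A - (A * N⁻¹ * A) * A by rw [hXA]; rw [Matrix.sub_mul],
        Matrix.trace_sub]
    rw [e3, e4]
    linarith
  have hfrob : frob X ≤ frob A := by
    unfold frob
    rw [hXsymm, hAsymm]
    exact Real.sqrt_le_sqrt htr
  have : (0:ℝ) ≤ frob A := Real.sqrt_nonneg _
  calc frob X ≤ frob A := hfrob
    _ ≤ 2 * frob A := by linarith

end
end

section
/- Let Σ₀ be a p×p symmetric positive definite matrix, F a K×K symmetric positive definite matrix, B a p×K real matrix, and Σ = Σ₀ + B F B'. Then Σ₀^{-1/2} B (F⁻¹ + B'Σ₀⁻¹B)⁻¹ B' Σ₀^{-1/2} = I_p − Σ₀^{1/2} Σ⁻¹ Σ₀^{1/2}; this matrix is symmetric positive semidefinite, has rank at most K, all its eigenvalues lie in [0, 1], and its Frobenius norm is at most K^{1/2}. -/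
open Matrix

noncomputable section

set_option linter.unusedSectionVars false

namespace FFL

variable {n m : Type*} [Fintype n] [Fintype m] [DecidableEq n]

lemma conjT (A : Matrix m n ℝ) : Aᴴ = Aᵀ := conjTranspose_eq_transpose_of_trivial A

lemma sqrt_spec {M : Matrix n n ℝ} (hM : M.PosSemidef) :
    ((hM.1.eigenvectorUnitary : Matrix n n ℝ) *
      diagonal (fun i => √(hM.1.eigenvalues i)) *
      (star hM.1.eigenvectorUnitary : Matrix n n ℝ)).PosSemidef ∧
    (hM.1.eigenvectorUnitary : Matrix n n ℝ) *
      diagonal (fun i => √(hM.1.eigenvalues i)) *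
      (star hM.1.eigenvectorUnitary : Matrix n n ℝ) *
    ((hM.1.eigenvectorUnitary : Matrix n n ℝ) *
      diagonal (fun i => √(hM.1.eigenvalues i)) *
      (star hM.1.eigenvectorUnitary : Matrix n n ℝ)) = M := by
  set U : Matrix n n ℝ := (hM.1.eigenvectorUnitary : Matrix n n ℝ)
  have hU : star U * U = 1 := Unitary.coe_star_mul_self _
  constructor
  · have h := (PosSemidef.diagonal (d := (fun i => √(hM.1.eigenvalues i)))
      (fun i => Real.sqrt_nonneg _)).mul_mul_conjTranspose_same U
    simpa [conjTranspose_eq_transpose_of_trivial, star_eq_conjTranspose] using h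
  · have hspec := hM.1.spectral_theorem
    conv_rhs => rw [hspec]
    rw [Unitary.conjStarAlgAut_apply]
    have hd : diagonal (fun i => √(hM.1.eigenvalues i)) *
        diagonal (fun i => √(hM.1.eigenvalues i)) = diagonal (RCLike.ofReal ∘ hM.1.eigenvalues) := by
      rw [diagonal_mul_diagonal]; congr 1; funext i
      simp [Real.mul_self_sqrt (hM.eigenvalues_nonneg i)]
    calc _ = U * (diagonal (fun i => √(hM.1.eigenvalues i)) * (star U * U) *
        diagonal (fun i => √(hM.1.eigenvalues i))) * star U := by simp only [Matrix.mul_assoc]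
      _ = _ := by rw [hU, Matrix.mul_one, hd]

lemma exists_sqrt {M : Matrix n n ℝ} (hM : M.PosSemidef) :
    ∃ R : Matrix n n ℝ, R.PosSemidef ∧ R * R = M := ⟨_, sqrt_spec hM⟩

lemma psd_diag_nonneg {M : Matrix n n ℝ} (hM : M.PosSemidef) (i : n) : 0 ≤ M i i := by
  have h := hM.2 (Finsupp.single i 1)
  simpa using h

lemma psd_trace_nonneg {M : Matrix n n ℝ} (hM : M.PosSemidef) : 0 ≤ M.trace :=
  Finset.sum_nonneg fun i _ => psd_diag_nonneg hM i

lemma psd_sym {M : Matrix n n ℝ} (hM : M.PosSemidef) : Mᵀ = M := by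
  rw [← conjT]; exact hM.1

lemma psd_trace_mul_nonneg {A B : Matrix n n ℝ} (hA : A.PosSemidef) (hB : B.PosSemidef) :
    0 ≤ (A * B).trace := by
  obtain ⟨S, hSpsd, hs⟩ := exists_sqrt hA
  have h2 : (S * B * S).PosSemidef := by
    have := hB.mul_mul_conjTranspose_same S
    rwa [hSpsd.1] at this
  have h1 : (A * B).trace = (S * B * S).trace := by
    conv_lhs => rw [← hs]
    rw [Matrix.mul_assoc, Matrix.trace_mul_comm]
  rw [h1]
  exact psd_trace_nonneg h2

end FFL

open scoped Classical in
/-- The positive semidefinite square root of a matrix (junk value `0` if the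
matrix is not positive semidefinite). -/
def matSqrt {d : ℕ} (A : Matrix (Fin d) (Fin d) ℝ) : Matrix (Fin d) (Fin d) ℝ :=
  if h : A.PosSemidef then
    (h.1.eigenvectorUnitary : Matrix (Fin d) (Fin d) ℝ) *
      diagonal ((↑) ∘ (√·) ∘ h.1.eigenvalues) *
      (star h.1.eigenvectorUnitary : Matrix (Fin d) (Fin d) ℝ)
  else 0

/-- **Fan–Fan–Lv, proof of Theorem 3.** If `Σ₀`, `F` are symmetric positive definite
and `Σ = Σ₀ + B F Bᵀ`, then
`Σ₀^{-1/2} B (F⁻¹ + BᵀΣ₀⁻¹B)⁻¹ Bᵀ Σ₀^{-1/2} = I − Σ₀^{1/2} Σ⁻¹ Σ₀^{1/2}`;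
this matrix is symmetric positive semidefinite of rank at most `K`, its eigenvalues
lie in `[0,1]` (equivalently, `0 ≼ M ≼ I` in the Loewner order), and its Frobenius
norm is at most `K^{1/2}`. -/
theorem sandwich_identity_rank_bound (p K : ℕ)
    (S0 : Matrix (Fin p) (Fin p) ℝ) (hS0 : S0.PosDef)
    (F : Matrix (Fin K) (Fin K) ℝ) (hF : F.PosDef)
    (B : Matrix (Fin p) (Fin K) ℝ) :
    (matSqrt S0)⁻¹ * B * (F⁻¹ + Bᵀ * S0⁻¹ * B)⁻¹ * Bᵀ * (matSqrt S0)⁻¹ =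
      1 - matSqrt S0 * (S0 + B * F * Bᵀ)⁻¹ * matSqrt S0 ∧
    ((matSqrt S0)⁻¹ * B * (F⁻¹ + Bᵀ * S0⁻¹ * B)⁻¹ * Bᵀ * (matSqrt S0)⁻¹).PosSemidef ∧
    ((matSqrt S0)⁻¹ * B * (F⁻¹ + Bᵀ * S0⁻¹ * B)⁻¹ * Bᵀ * (matSqrt S0)⁻¹).rank ≤ K ∧
    (1 - (matSqrt S0)⁻¹ * B * (F⁻¹ + Bᵀ * S0⁻¹ * B)⁻¹ * Bᵀ *
      (matSqrt S0)⁻¹).PosSemidef ∧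
    frob ((matSqrt S0)⁻¹ * B * (F⁻¹ + Bᵀ * S0⁻¹ * B)⁻¹ * Bᵀ * (matSqrt S0)⁻¹) ≤
      Real.sqrt K := by
  classical
  have hS0ps : S0.PosSemidef := hS0.posSemidef
  set Q : Matrix (Fin p) (Fin p) ℝ := matSqrt S0 with hQdef
  have hQspec : Q.PosSemidef ∧ Q * Q = S0 := by
    rw [hQdef, matSqrt, dif_pos hS0ps]; exact FFL.sqrt_spec hS0ps
  have hQpsd : Q.PosSemidef := hQspec.1
  have hQQ : Q * Q = S0 := hQspec.2
  have hQsym : Qᵀ = Q := FFL.psd_sym hQpsd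
  have hQdet : IsUnit Q.det := by
    have h2 : Q.det * Q.det = S0.det := by rw [← det_mul, hQQ]
    have hd := hS0.det_pos
    refine isUnit_iff_ne_zero.2 fun h0 => ?_
    rw [h0, mul_zero] at h2
    exact hd.ne' h2.symm
  have hQmul : Q * Q⁻¹ = 1 := mul_nonsing_inv Q hQdet
  have hQmul' : Q⁻¹ * Q = 1 := nonsing_inv_mul Q hQdet
  have hS0inv : S0⁻¹ = Q⁻¹ * Q⁻¹ := by rw [← hQQ, Matrix.mul_inv_rev]
  have hQit : (Q⁻¹)ᵀ = Q⁻¹ := by rw [transpose_nonsing_inv, hQsym]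
  -- G
  set G : Matrix (Fin K) (Fin K) ℝ := F⁻¹ + Bᵀ * S0⁻¹ * B with hGdef
  have hBSB : (Bᵀ * S0⁻¹ * B).PosSemidef := by
    have := hS0.inv.posSemidef.conjTranspose_mul_mul_same B
    rwa [FFL.conjT] at this
  have hGpd : G.PosDef := hF.inv.add_posSemidef hBSB
  have hW : G⁻¹.PosDef := hGpd.inv
  -- Woodbury
  have hSig : (S0 + B * F * Bᵀ).PosDef := hS0.add_posSemidef (by
    have := hF.posSemidef.mul_mul_conjTranspose_same B
    rwa [FFL.conjT] at this)
  have hWood : (S0 + B * F * Bᵀ)⁻¹ = S0⁻¹ - S0⁻¹ * B * G⁻¹ * Bᵀ * S0⁻¹ :=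
    add_mul_mul_inv_eq_sub S0 B F Bᵀ hS0.isUnit hF.isUnit hGpd.isUnit
  have e1 : Q * S0⁻¹ = Q⁻¹ := by
    rw [hS0inv, ← Matrix.mul_assoc, hQmul, Matrix.one_mul]
  have e2 : S0⁻¹ * Q = Q⁻¹ := by
    rw [hS0inv, Matrix.mul_assoc, hQmul', Matrix.mul_one]
  have key : Q * (S0⁻¹ - S0⁻¹ * B * G⁻¹ * Bᵀ * S0⁻¹) * Q
      = 1 - Q⁻¹ * B * G⁻¹ * Bᵀ * Q⁻¹ := by
    rw [Matrix.mul_sub, Matrix.sub_mul]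
    congr 1
    · rw [e1, hQmul']
    · simp only [← Matrix.mul_assoc]
      rw [e1]
      rw [Matrix.mul_assoc (Q⁻¹ * B * G⁻¹ * Bᵀ) S0⁻¹ Q, e2]
  have hid : Q⁻¹ * B * G⁻¹ * Bᵀ * Q⁻¹ = 1 - Q * (S0 + B * F * Bᵀ)⁻¹ * Q := by
    rw [hWood, key, sub_sub_cancel]
  -- C form
  set M : Matrix (Fin p) (Fin p) ℝ := Q⁻¹ * B * G⁻¹ * Bᵀ * Q⁻¹ with hMdef
  set C : Matrix (Fin p) (Fin K) ℝ := Q⁻¹ * B with hCdef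
  have hCt : Cᵀ = Bᵀ * Q⁻¹ := by rw [hCdef, transpose_mul, hQit]
  have hCform : M = C * G⁻¹ * Cᵀ := by
    rw [hMdef, hCt, hCdef]; simp only [Matrix.mul_assoc]
  have hMpsd : M.PosSemidef := by
    rw [hCform]
    have := hW.posSemidef.mul_mul_conjTranspose_same C
    rwa [FFL.conjT] at this
  -- rank
  have hrank : M.rank ≤ K := by
    rw [hCform]
    calc (C * G⁻¹ * Cᵀ).rank ≤ (C * G⁻¹).rank := rank_mul_le_left _ _
      _ ≤ C.rank := rank_mul_le_left _ _
      _ ≤ K := rank_le_width C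
  -- 1 - M psd
  have h1M : 1 - M = Q * (S0 + B * F * Bᵀ)⁻¹ * Q := by rw [hid, sub_sub_cancel]
  have h1Mpsd : (1 - M).PosSemidef := by
    rw [h1M]
    have := hSig.inv.posSemidef.mul_mul_conjTranspose_same Q
    rwa [FFL.conjT, hQsym] at this
  -- Frobenius bound
  obtain ⟨R, hRpsd, hRR⟩ := FFL.exists_sqrt hW.posSemidef
  have hRsym : Rᵀ = R := FFL.psd_sym hRpsd
  have hRdet : IsUnit R.det := by
    have h2 : R.det * R.det = (G⁻¹).det := by rw [← det_mul, hRR]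
    have hd := hW.det_pos
    refine isUnit_iff_ne_zero.2 fun h0 => ?_
    rw [h0, mul_zero] at h2
    exact hd.ne' h2.symm
  have hRGR : R * G * R = 1 := by
    have hGinv : G = R⁻¹ * R⁻¹ := by
      have h3 : G⁻¹⁻¹ = G :=
        nonsing_inv_nonsing_inv G ((isUnit_iff_isUnit_det G).1 hGpd.isUnit)
      rw [← h3, ← hRR, Matrix.mul_inv_rev]
    rw [hGinv, ← Matrix.mul_assoc, mul_nonsing_inv R hRdet, Matrix.one_mul,
      nonsing_inv_mul R hRdet]
  set N : Matrix (Fin K) (Fin K) ℝ := R * (Cᵀ * C) * R with hNdef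
  have hNpsd : N.PosSemidef := by
    have h := (posSemidef_conjTranspose_mul_self C).mul_mul_conjTranspose_same R
    rwa [FFL.conjT, FFL.conjT, hRsym] at h
  have hCtC : Cᵀ * C = Bᵀ * S0⁻¹ * B := by
    rw [hCt, hCdef, hS0inv]; simp only [Matrix.mul_assoc]
  have h1N : 1 - N = R * F⁻¹ * R := by
    have hsub : G - Cᵀ * C = F⁻¹ := by rw [hCtC, hGdef, add_sub_cancel_right]
    calc 1 - N = R * G * R - R * (Cᵀ * C) * R := by rw [hRGR]
      _ = R * (G - Cᵀ * C) * R := by rw [Matrix.mul_sub, Matrix.sub_mul]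
      _ = R * F⁻¹ * R := by rw [hsub]
  have h1Npsd : (1 - N).PosSemidef := by
    rw [h1N]
    have h := hF.inv.posSemidef.mul_mul_conjTranspose_same R
    rwa [FFL.conjT, hRsym] at h
  have hM' : M = (C * R) * (R * Cᵀ) := by
    rw [hCform, ← hRR]
    simp only [Matrix.mul_assoc]
  have hN' : N = (R * Cᵀ) * (C * R) := by
    rw [hNdef]
    simp only [Matrix.mul_assoc]
  have htr : (M * M).trace = (N * N).trace := by
    rw [hM', hN', Matrix.mul_assoc (C * R) (R * Cᵀ) _, Matrix.trace_mul_comm]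
    simp only [Matrix.mul_assoc]
  have hNN : (N * N).trace ≤ N.trace := by
    have h := FFL.psd_trace_mul_nonneg hNpsd h1Npsd
    rw [Matrix.mul_sub, Matrix.mul_one, trace_sub] at h
    linarith
  have htrN : N.trace ≤ (K : ℝ) := by
    have hdiag : ∀ i, N i i ≤ 1 := by
      intro i
      have h := FFL.psd_diag_nonneg h1Npsd i
      simp only [Matrix.sub_apply, Matrix.one_apply_eq] at h
      linarith
    calc N.trace = ∑ i, N i i := rfl
      _ ≤ ∑ _i : Fin K, (1 : ℝ) := Finset.sum_le_sum fun i _ => hdiag i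
      _ = K := by simp
  have hfrob : frob M ≤ Real.sqrt K := by
    show Real.sqrt ((M * Mᵀ).trace) ≤ Real.sqrt K
    rw [FFL.psd_sym hMpsd]
    exact Real.sqrt_le_sqrt (by rw [htr]; linarith)
  exact ⟨hid, hMpsd, hrank, h1Mpsd, hfrob⟩

end
end
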